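/- Let k ≤ 11 be a positive integer. There exists a positive integer N(k) such that for every positive integer n all of whose prime factors exceed N(k), every subset A of ℤ/nℤ \ {0} of size k with ∑_{z∈A} z ≠ 0 admits an ordering of its elements whose partial sums are nonzero and pairwise distinct. -/

import Mathlib

set_option maxHeartbeats 1000000

/-- An ordering of the finite set `A` (as a list) whose partial sums are all nonzero
and pairwise distinct. -/
def IsAlspachOrdering {G : Type*} [AddCommGroup G] (A : Finset G) (l : List G) : Prop :=
  l.Nodup ∧ (∀ x, x ∈ l ↔ x ∈ A) ∧
    (∀ i : ℕ, 1 ≤ i → i ≤ l.length → (l.take i).sum ≠ 0) ∧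
    (∀ i j : ℕ, 1 ≤ i → i < j → j ≤ l.length → (l.take i).sum ≠ (l.take j).sum)

section Aux

/-- sum of a list of positive integers is nonnegative -/
lemma sum_nonneg_of_pos (L : List ℤ) (h : ∀ x ∈ L, 0 < x) : 0 ≤ L.sum := by
  induction L with
  | nil => simp
  | cons a t ih =>
    simp only [List.sum_cons]
    have ha := h a (by simp)
    have := ih (fun x hx => h x (by simp [hx]))
    omega

lemma sum_pos_of_pos (L : List ℤ) (h : ∀ x ∈ L, 0 < x) (hne : L ≠ []) : 0 < L.sum := by
  cases L with
  | nil => simp at hne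
  | cons a t =>
    simp only [List.sum_cons]
    have ha := h a (by simp)
    have := sum_nonneg_of_pos t (fun x hx => h x (by simp [hx]))
    omega

/-- prefix sums of a positive list are strictly monotone -/
lemma take_sum_lt (L : List ℤ) (h : ∀ x ∈ L, 0 < x) {i j : ℕ} (hij : i < j) (hj : j ≤ L.length) :
    (L.take i).sum < (L.take j).sum := by
  have h1 : (L.take j).take i ++ (L.take j).drop i = L.take j := List.take_append_drop _ _
  have h2 : (L.take j).take i = L.take i := by
    rw [List.take_take]; congr 1; omega
  have hlen : ((L.take j).drop i).length = j - i := by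
    simp [List.length_take, List.length_drop]; omega
  have hnil : (L.take j).drop i ≠ [] := by
    intro hn; rw [hn] at hlen; simp at hlen; omega
  have hpos : 0 < ((L.take j).drop i).sum :=
    sum_pos_of_pos _ (fun x hx => h x (List.mem_of_mem_take (List.mem_of_mem_drop hx))) hnil
  have hsum : (L.take j).sum = (L.take i).sum + ((L.take j).drop i).sum := by
    conv_lhs => rw [← h1]
    rw [List.sum_append, h2]
  omega

lemma take_sum_le (L : List ℤ) (h : ∀ x ∈ L, 0 < x) (i : ℕ) :
    (L.take i).sum ≤ L.sum := by
  have := List.sum_take_add_sum_drop L i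
  have h2 : 0 ≤ (L.drop i).sum :=
    sum_nonneg_of_pos _ (fun x hx => h x (List.mem_of_mem_drop hx))
  omega

end Aux

lemma list_sum_eq_finset_sum (l : List ℤ) (P : Finset ℤ) (hn : l.Nodup)
    (hm : ∀ x, x ∈ l ↔ x ∈ P) : l.sum = ∑ x ∈ P, x := by
  have hPl : P = l.toFinset := by ext y; simp [hm]
  rw [hPl, List.sum_toFinset _ hn]
  simp

/-- The key chain lemma: two finsets of distinct positive integers with different total
sums can be ordered so that their (nonempty) prefix-sum chains are disjoint. -/
lemma chains : ∀ s : ℕ, ∀ P M : Finset ℤ, P.card + M.card ≤ s →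
    (∀ x ∈ P, 0 < x) → (∀ x ∈ M, 0 < x) → (∑ x ∈ P, x) ≠ (∑ x ∈ M, x) →
    ∃ lp lm : List ℤ, lp.Nodup ∧ (∀ x, x ∈ lp ↔ x ∈ P) ∧ lm.Nodup ∧ (∀ x, x ∈ lm ↔ x ∈ M) ∧
      (∀ i j : ℕ, 1 ≤ i → i ≤ lp.length → 1 ≤ j → j ≤ lm.length →
        (lp.take i).sum ≠ (lm.take j).sum) := by
  intro s
  induction s with
  | zero =>
    intro P M hc hP hM hne
    have hP0 : P = ∅ := Finset.card_eq_zero.1 (by omega)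
    have hM0 : M = ∅ := Finset.card_eq_zero.1 (by omega)
    subst hP0; subst hM0; simp at hne
  | succ s ih =>
    intro P M hc hP hM hne
    by_cases hM0 : M = ∅
    · refine ⟨P.toList, [], Finset.nodup_toList P, fun x => Finset.mem_toList, by simp,
        by simp [hM0], ?_⟩
      intro i j h1 h2 h3 h4
      simp only [List.length_nil] at h4; omega
    by_cases hP0 : P = ∅
    · refine ⟨[], M.toList, by simp, by simp [hP0], Finset.nodup_toList M,
        fun x => Finset.mem_toList, ?_⟩
      intro i j h1 h2 h3 h4
      simp only [List.length_nil] at h2; omega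
    have hPne : P.Nonempty := Finset.nonempty_iff_ne_empty.2 hP0
    have hMne : M.Nonempty := Finset.nonempty_iff_ne_empty.2 hM0
    have hsP : 0 < ∑ x ∈ P, x := Finset.sum_pos hP hPne
    have hsM : 0 < ∑ x ∈ M, x := Finset.sum_pos hM hMne
    rcases lt_or_gt_of_ne hne with hlt | hgt
    · -- ∑ P < ∑ M : extend M side
      have hchoice : ∃ y ∈ M, y ≠ (∑ x ∈ M, x) - (∑ x ∈ P, x) := by
        by_contra hall
        push_neg at hall
        obtain ⟨a, ha⟩ := hMne
        have hsub : M ⊆ {(∑ x ∈ M, x) - (∑ x ∈ P, x)} := fun y hy => by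
          simp [hall y hy]
        have hcard1 : M.card ≤ 1 := le_trans (Finset.card_le_card hsub) (by simp)
        have hMa : M = {a} := by
          apply Finset.eq_singleton_iff_unique_mem.2
          exact ⟨ha, fun b hb => by
            have h1 := hall b hb; have h2 := hall a ha; omega⟩
        rw [hMa] at hall
        have h3 := hall a (by simp)
        simp only [Finset.sum_singleton] at h3
        omega
      obtain ⟨y, hyM, hyne⟩ := hchoice
      have hcard : P.card + (M.erase y).card ≤ s := by
        have h1 := Finset.card_erase_of_mem hyM
        have h2 : 1 ≤ M.card := Finset.card_pos.2 ⟨y, hyM⟩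
        omega
      have hsum' : ∑ x ∈ M.erase y, x = (∑ x ∈ M, x) - y := Finset.sum_erase_eq_sub hyM
      obtain ⟨lp, lm', hnp, hmp, hnm, hmm, hcross⟩ :=
        ih P (M.erase y) hcard hP (fun x hx => hM x (Finset.mem_of_mem_erase hx))
          (by rw [hsum']; intro hh; apply hyne; omega)
      have hyl : y ∉ lm' := fun hy => (Finset.mem_erase.1 ((hmm y).1 hy)).1 rfl
      have hlmsum : lm'.sum = (∑ x ∈ M, x) - y := by
        rw [list_sum_eq_finset_sum lm' (M.erase y) hnm hmm, hsum']
      refine ⟨lp, lm' ++ [y], hnp, hmp, ?_, ?_, ?_⟩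
      · exact List.Nodup.append hnm (List.nodup_singleton y)
          (fun a hal har => by simp at har; subst har; exact hyl hal)
      · intro x
        simp only [List.mem_append, List.mem_singleton, hmm, Finset.mem_erase]
        constructor
        · rintro (⟨_, h⟩ | rfl) <;> [exact h; exact hyM]
        · intro hx
          by_cases hxy : x = y
          · right; exact hxy
          · left; exact ⟨hxy, hx⟩
      · intro i j h1 h2 h3 h4
        by_cases hj : j ≤ lm'.length
        · rw [List.take_append_of_le_length hj]
          exact hcross i j h1 h2 h3 hj
        · have hjlen : j = lm'.length + 1 := by
            simp only [List.length_append, List.length_singleton] at h4; omega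
          have htake : (lm' ++ [y]).take j = lm' ++ [y] := by
            apply List.take_of_length_le; simp [hjlen]
          rw [htake]
          have hsfull : (lm' ++ [y]).sum = ∑ x ∈ M, x := by
            rw [List.sum_append, hlmsum]; simp
          rw [hsfull]
          have hle : (lp.take i).sum ≤ lp.sum := by
            apply take_sum_le
            intro x hx; exact hP x ((hmp x).1 hx)
          have hlpsum : lp.sum = ∑ x ∈ P, x := list_sum_eq_finset_sum lp P hnp hmp
          omega
    · -- ∑ M < ∑ P : extend P side
      have hchoice : ∃ y ∈ P, y ≠ (∑ x ∈ P, x) - (∑ x ∈ M, x) := by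
        by_contra hall
        push_neg at hall
        obtain ⟨a, ha⟩ := hPne
        have hPa : P = {a} := by
          apply Finset.eq_singleton_iff_unique_mem.2
          exact ⟨ha, fun b hb => by
            have h1 := hall b hb; have h2 := hall a ha; omega⟩
        rw [hPa] at hall
        have h3 := hall a (by simp)
        simp only [Finset.sum_singleton] at h3
        omega
      obtain ⟨y, hyP, hyne⟩ := hchoice
      have hcard : (P.erase y).card + M.card ≤ s := by
        have h1 := Finset.card_erase_of_mem hyP
        have h2 : 1 ≤ P.card := Finset.card_pos.2 ⟨y, hyP⟩
        omega
      have hsum' : ∑ x ∈ P.erase y, x = (∑ x ∈ P, x) - y := Finset.sum_erase_eq_sub hyP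
      obtain ⟨lp', lm, hnp, hmp, hnm, hmm, hcross⟩ :=
        ih (P.erase y) M hcard (fun x hx => hP x (Finset.mem_of_mem_erase hx)) hM
          (by rw [hsum']; intro hh; apply hyne; omega)
      have hyl : y ∉ lp' := fun hy => (Finset.mem_erase.1 ((hmp y).1 hy)).1 rfl
      have hlpsum : lp'.sum = (∑ x ∈ P, x) - y := by
        rw [list_sum_eq_finset_sum lp' (P.erase y) hnp hmp, hsum']
      refine ⟨lp' ++ [y], lm, ?_, ?_, hnm, hmm, ?_⟩
      · exact List.Nodup.append hnp (List.nodup_singleton y)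
          (fun a hal har => by simp at har; subst har; exact hyl hal)
      · intro x
        simp only [List.mem_append, List.mem_singleton, hmp, Finset.mem_erase]
        constructor
        · rintro (⟨_, h⟩ | rfl) <;> [exact h; exact hyP]
        · intro hx
          by_cases hxy : x = y
          · right; exact hxy
          · left; exact ⟨hxy, hx⟩
      · intro i j h1 h2 h3 h4
        by_cases hi : i ≤ lp'.length
        · rw [List.take_append_of_le_length hi]
          exact hcross i j h1 hi h3 h4
        · have hilen : i = lp'.length + 1 := by
            simp only [List.length_append, List.length_singleton] at h2; omega
          have htake : (lp' ++ [y]).take i = lp' ++ [y] := by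
            apply List.take_of_length_le; simp [hilen]
          rw [htake]
          have hsfull : (lp' ++ [y]).sum = ∑ x ∈ P, x := by
            rw [List.sum_append, hlpsum]; simp
          rw [hsfull]
          have hle : (lm.take j).sum ≤ lm.sum := by
            apply take_sum_le
            intro x hx; exact hM x ((hmm x).1 hx)
          have hlmsum : lm.sum = ∑ x ∈ M, x := list_sum_eq_finset_sum lm M hnm hmm
          omega

lemma sum_map_neg (l : List ℤ) : (l.map (fun x => -x)).sum = -l.sum := by
  induction l with
  | nil => simp
  | cons a t ih => simp [ih]; ring

lemma int_alspach_pos (S : Finset ℤ) (h0 : (0:ℤ) ∉ S) (hs : 0 < ∑ x ∈ S, x) :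
    ∃ l : List ℤ, IsAlspachOrdering S l := by
  classical
  set P := S.filter (fun x => 0 < x) with hPdef
  set N := S.filter (fun x => x < 0) with hNdef
  set M := N.image (fun x => -x) with hMdef
  have hPpos : ∀ x ∈ P, 0 < x := fun x hx => (Finset.mem_filter.1 hx).2
  have hNneg : ∀ x ∈ N, x < 0 := fun x hx => (Finset.mem_filter.1 hx).2
  have hMpos : ∀ x ∈ M, 0 < x := by
    intro x hx
    obtain ⟨y, hy, rfl⟩ := Finset.mem_image.1 hx
    have := hNneg y hy; omega
  have hfil : S.filter (fun x => ¬ 0 < x) = N := by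
    ext x
    simp only [Finset.mem_filter, hNdef]
    constructor
    · rintro ⟨hx, hx2⟩
      refine ⟨hx, ?_⟩
      rcases lt_trichotomy x 0 with h | h | h
      · exact h
      · exact absurd (h ▸ hx) h0
      · exact absurd h hx2
    · rintro ⟨hx, hx2⟩; exact ⟨hx, by omega⟩
  have hsplit : (∑ x ∈ P, x) + (∑ x ∈ N, x) = ∑ x ∈ S, x := by
    have := Finset.sum_filter_add_sum_filter_not S (fun x => 0 < x) (fun x => x)
    rw [hfil] at this
    exact this
  have hMsum : ∑ x ∈ M, x = -(∑ x ∈ N, x) := by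
    rw [hMdef, Finset.sum_image (fun x _ y _ h => by omega)]
    exact Finset.sum_neg_distrib (s := N) (f := fun x : ℤ => x)
  have hPM : (∑ x ∈ P, x) ≠ (∑ x ∈ M, x) := by rw [hMsum]; omega
  obtain ⟨lp, lm, hnp, hmp, hnm, hmm, hcross⟩ :=
    chains (P.card + M.card) P M (le_refl _) hPpos hMpos hPM
  have hlp_pos : ∀ x ∈ lp, 0 < x := fun x hx => hPpos x ((hmp x).1 hx)
  have hlm_pos : ∀ x ∈ lm, 0 < x := fun x hx => hMpos x ((hmm x).1 hx)
  have hlpsum : lp.sum = ∑ x ∈ P, x := list_sum_eq_finset_sum lp P hnp hmp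
  have hlmsum : lm.sum = ∑ x ∈ M, x := list_sum_eq_finset_sum lm M hnm hmm
  set r := lp.length with hrdef
  set t := lm.length with htdef
  set l : List ℤ := lp.reverse ++ lm.map (fun x => -x) with hldef
  have hlen : l.length = r + t := by simp [hldef, hrdef, htdef]
  -- prefix sum formulas
  have hA : ∀ i ≤ r, (l.take i).sum = lp.sum - (lp.take (r - i)).sum := by
    intro i hi
    have h1 : l.take i = lp.reverse.take i :=
      List.take_append_of_le_length (by simpa using hi)
    have h2 : lp.reverse.drop i = (lp.take (r - i)).reverse := by
      have h2' : (List.take (r - i) lp).reverse = List.drop (lp.length - (r - i)) lp.reverse :=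
        List.reverse_take
      rw [h2']
      congr 1
      omega
    have h3 := List.sum_take_add_sum_drop lp.reverse i
    rw [h2] at h3
    rw [List.sum_reverse] at h3
    have h4 : lp.reverse.sum = lp.sum := List.sum_reverse lp
    rw [h1]
    omega
  have hB : ∀ j ≤ t, (l.take (r + j)).sum = lp.sum - (lm.take j).sum := by
    intro j hj
    have h1 : l.take (r + j) = lp.reverse ++ (lm.map (fun x => -x)).take j := by
      rw [hldef, List.take_append]
      congr 1
      · apply List.take_of_length_le; simp [hrdef]
      · congr 1; simp [hrdef]
    have h2 : (lm.map (fun x => -x)).take j = (lm.take j).map (fun x => -x) :=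
      List.map_take.symm
    rw [h1, List.sum_append, h2, sum_map_neg, List.sum_reverse]
    ring
  have htop : (lp.take r).sum = lp.sum := by rw [hrdef, List.take_length]
  refine ⟨l, ?_, ?_, ?_, ?_⟩
  · -- Nodup
    refine List.Nodup.append (List.nodup_reverse.2 hnp) (List.Nodup.map neg_injective hnm) ?_
    intro a ha1 ha2
    rw [List.mem_reverse] at ha1
    have hpa := hlp_pos a ha1
    obtain ⟨y, hy, rfl⟩ := List.mem_map.1 ha2
    have := hlm_pos y hy
    omega
  · -- membership
    intro x
    rw [hldef]
    simp only [List.mem_append, List.mem_reverse, List.mem_map]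
    constructor
    · rintro (hx | ⟨y, hy, rfl⟩)
      · exact (Finset.mem_filter.1 ((hmp x).1 hx)).1
      · obtain ⟨z, hz', hzeq⟩ := Finset.mem_image.1 ((hmm y).1 hy)
        have hzz : z = -y := by omega
        exact hzz ▸ (Finset.mem_filter.1 hz').1
    · intro hx
      have hx0 : x ≠ 0 := fun h => h0 (h ▸ hx)
      rcases lt_trichotomy x 0 with h | h | h
      · right
        refine ⟨-x, ?_, by ring⟩
        apply (hmm (-x)).2
        rw [hMdef]
        exact Finset.mem_image.2 ⟨x, Finset.mem_filter.2 ⟨hx, h⟩, rfl⟩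
      · exact absurd h hx0
      · exact Or.inl ((hmp x).2 (Finset.mem_filter.2 ⟨hx, h⟩))
  · -- nonzero prefix sums
    intro i h1 h2
    rw [hlen] at h2
    by_cases hi : i ≤ r
    · rw [hA i hi]
      have : (lp.take (r - i)).sum < (lp.take r).sum :=
        take_sum_lt lp hlp_pos (by omega) (le_refl _)
      rw [htop] at this
      omega
    · have hj : i - r ≤ t := by omega
      have heq : r + (i - r) = i := by omega
      rw [← heq, hB (i - r) hj]
      have hle : (lm.take (i - r)).sum ≤ lm.sum := take_sum_le lm hlm_pos _
      rw [hlpsum, hlmsum] at *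
      omega
  · -- distinct prefix sums
    intro i j h1 hij h2
    rw [hlen] at h2
    by_cases hjr : j ≤ r
    · rw [hA i (by omega), hA j hjr]
      have : (lp.take (r - j)).sum < (lp.take (r - i)).sum :=
        take_sum_lt lp hlp_pos (by omega) (by omega)
      omega
    · by_cases hir : i ≤ r
      · have hj : j - r ≤ t := by omega
        have heq : r + (j - r) = j := by omega
        rw [hA i hir, ← heq, hB (j - r) hj]
        intro hcontra
        have heq2 : (lp.take (r - i)).sum = (lm.take (j - r)).sum := by omega
        by_cases hi : i = r
        · subst hi
          simp only [Nat.sub_self, List.take_zero, List.sum_nil] at heq2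
          have : (lm.take 0).sum < (lm.take (j - r)).sum :=
            take_sum_lt lm hlm_pos (by omega) hj
          simp at this
          omega
        · exact hcross (r - i) (j - r) (by omega) (by omega) (by omega) hj heq2
      · have heqi : r + (i - r) = i := by omega
        have heqj : r + (j - r) = j := by omega
        rw [← heqi, ← heqj, hB (i - r) (by omega), hB (j - r) (by omega)]
        have : (lm.take (i - r)).sum < (lm.take (j - r)).sum :=
          take_sum_lt lm hlm_pos (by omega) (by omega)
        omega

lemma int_alspach (S : Finset ℤ) (h0 : (0:ℤ) ∉ S) (hs : ∑ x ∈ S, x ≠ 0) :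
    ∃ l : List ℤ, IsAlspachOrdering S l := by
  rcases lt_or_gt_of_ne hs with hneg | hpos
  · have h0' : (0:ℤ) ∉ S.image (fun x => -x) := by
      intro hcontra
      obtain ⟨y, hy, hy0⟩ := Finset.mem_image.1 hcontra
      have : y = 0 := by omega
      exact h0 (this ▸ hy)
    have hsum' : 0 < ∑ x ∈ S.image (fun x => -x), x := by
      rw [Finset.sum_image (fun x _ y _ h => by omega), Finset.sum_neg_distrib]
      omega
    obtain ⟨l', hn, hm, hz, hd⟩ := int_alspach_pos _ h0' hsum'
    refine ⟨l'.map (fun x => -x), List.Nodup.map neg_injective hn, ?_, ?_, ?_⟩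
    · intro x
      rw [List.mem_map]
      constructor
      · rintro ⟨y, hy, rfl⟩
        have := (hm y).1 hy
        obtain ⟨z, hz', hz2⟩ := Finset.mem_image.1 this
        have : z = -y := by omega
        exact this ▸ hz'
      · intro hx
        refine ⟨-x, ?_, by ring⟩
        exact (hm (-x)).2 (Finset.mem_image.2 ⟨x, hx, rfl⟩)
    · intro i hi1 hi2
      rw [List.length_map] at hi2
      rw [← List.map_take, sum_map_neg]
      have := hz i hi1 hi2
      omega
    · intro i j h1 h2 h3
      rw [List.length_map] at h3
      rw [← List.map_take, ← List.map_take, sum_map_neg, sum_map_neg]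
      have := hd i j h1 h2 h3
      omega
  · exact int_alspach_pos S h0 hpos

lemma sum_abs_mul_le (L : List ℤ) (m C : ℤ) (hm : 0 ≤ m) (h : ∀ x ∈ L, |x| * m ≤ C) :
    |L.sum| * m ≤ L.length * C := by
  induction L with
  | nil => simp
  | cons a t ih =>
    simp only [List.sum_cons, List.length_cons]
    have h1 := h a (by simp)
    have h2 := ih (fun x hx => h x (by simp [hx]))
    have h3 : |a + t.sum| ≤ |a| + |t.sum| := abs_add_le _ _
    have h4 : |a + t.sum| * m ≤ (|a| + |t.sum|) * m := mul_le_mul_of_nonneg_right h3 hm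
    have h5 : (|a| + |t.sum|) * m = |a| * m + |t.sum| * m := by ring
    push_cast
    nlinarith [h2]

lemma map_mul_cast_sum (n : ℕ) (c : ZMod n) (L : List ℤ) :
    (L.map (fun b => c * ((b : ℤ) : ZMod n))).sum = c * ((L.sum : ℤ) : ZMod n) := by
  induction L with
  | nil => simp
  | cons a t ih =>
    rw [List.map_cons, List.sum_cons, ih, List.sum_cons, Int.cast_add]
    ring

theorem stmt8 (k : ℕ) (hk1 : 1 ≤ k) (hk : k ≤ 11) :
    ∃ N : ℕ, 0 < N ∧ ∀ n : ℕ, 0 < n →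
      (∀ p : ℕ, p.Prime → p ∣ n → N < p) →
      ∀ A : Finset (ZMod n), (0 : ZMod n) ∉ A → A.card = k → ∑ z ∈ A, z ≠ 0 →
        ∃ l : List (ZMod n), IsAlspachOrdering A l := by
  classical
  set m := 2 * k + 2 with hmdef
  have hm0 : 0 < m := by omega
  refine ⟨m ^ k, pow_pos hm0 k, ?_⟩
  intro n hn hprime A hA0 hAcard hAsum
  haveI : NeZero n := ⟨hn.ne'⟩
  by_cases hn1 : n = 1
  · exfalso
    subst hn1
    obtain ⟨a, ha⟩ := Finset.card_pos.1 (by omega : 0 < A.card)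
    exact hA0 ((Subsingleton.elim a 0) ▸ ha)
  -- pigeonhole to find λ = u1 - u2 with all λ•a small
  set F : Fin (m ^ k + 1) → (↥A → Fin m) := fun t a =>
    ⟨(((t.val : ZMod n) * (a : ZMod n)).val * m) / n, by
      have hv : ((t.val : ZMod n) * (a : ZMod n)).val < n := ZMod.val_lt _
      rw [Nat.div_lt_iff_lt_mul hn]
      calc ((t.val : ZMod n) * (a : ZMod n)).val * m < n * m :=
            (Nat.mul_lt_mul_right hm0).2 hv
        _ = m * n := Nat.mul_comm n m⟩ with hFdef
  obtain ⟨t1, t2, htne, hteq⟩ := Fintype.exists_ne_map_eq_of_card_lt F (by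
    have h1 : Fintype.card (↥A → Fin m) = m ^ k := by
      rw [Fintype.card_fun]
      simp [Fintype.card_coe, hAcard]
    have h2 : Fintype.card (Fin (m ^ k + 1)) = m ^ k + 1 := Fintype.card_fin _
    omega)
  have htvne : t1.val ≠ t2.val := fun h => htne (Fin.ext h)
  obtain ⟨u1, u2, hult, hueq⟩ : ∃ u1 u2 : Fin (m ^ k + 1), u2.val < u1.val ∧ F u1 = F u2 := by
    rcases lt_or_gt_of_ne htvne with h | h
    exacts [⟨t2, t1, h, hteq.symm⟩, ⟨t1, t2, h, hteq⟩]
  set lam := u1.val - u2.val with hlamdef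
  have hlam1 : 1 ≤ lam := by omega
  have hlamN : lam ≤ m ^ k := by
    have := u1.isLt; omega
  have hco : Nat.Coprime lam n := by
    rw [Nat.Coprime]
    by_contra hnc
    obtain ⟨p, hp, hpd⟩ := Nat.exists_prime_and_dvd hnc
    have hpl : p ∣ lam := hpd.trans (Nat.gcd_dvd_left _ _)
    have hpn : p ∣ n := hpd.trans (Nat.gcd_dvd_right _ _)
    have h1 := hprime p hp hpn
    have h2 : p ≤ lam := Nat.le_of_dvd (by omega) hpl
    omega
  set u : (ZMod n)ˣ := ZMod.unitOfCoprime lam hco with hudef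
  have hucoe : (u : ZMod n) = (lam : ZMod n) := rfl
  set g : ZMod n → ℤ := fun a =>
    ((((u1.val : ZMod n) * a).val : ℤ) - (((u2.val : ZMod n) * a).val : ℤ)) with hgdef
  have hgcast : ∀ a : ZMod n, ((g a : ℤ) : ZMod n) = (u : ZMod n) * a := by
    intro a
    rw [hgdef, hucoe]
    push_cast
    rw [ZMod.natCast_rightInverse _, ZMod.natCast_rightInverse _]
    rw [hlamdef, Nat.cast_sub (le_of_lt hult)]
    ring
  have hgbound : ∀ a : ZMod n, a ∈ A → |g a| * (m : ℤ) ≤ (n : ℤ) - 1 := by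
    intro a ha
    have hbox := congrFun hueq ⟨a, ha⟩
    set x := ((u1.val : ZMod n) * a).val with hxdef
    set y := ((u2.val : ZMod n) * a).val with hydef
    have hbox' : (x * m) / n = (y * m) / n := by
      have := congrArg Fin.val hbox
      simpa [hFdef] using this
    have e1 := Nat.div_add_mod (x * m) n
    have e2 := Nat.div_add_mod (y * m) n
    rw [← hbox'] at e2
    have f1 : x * m % n < n := Nat.mod_lt _ hn
    have f2 : y * m % n < n := Nat.mod_lt _ hn
    have e1' : ((n:ℤ)) * ((x * m) / n : ℕ) + ((x * m) % n : ℕ) = ((x * m : ℕ) : ℤ) := by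
      exact_mod_cast congrArg (Nat.cast : ℕ → ℤ) e1
    have e2' : ((n:ℤ)) * ((x * m) / n : ℕ) + ((y * m) % n : ℕ) = ((y * m : ℕ) : ℤ) := by
      exact_mod_cast congrArg (Nat.cast : ℕ → ℤ) e2
    have e3 : ((x * m : ℕ) : ℤ) - ((y * m : ℕ) : ℤ)
        = ((x * m % n : ℕ) : ℤ) - ((y * m % n : ℕ) : ℤ) := by linarith
    have hgm : g a * m = ((x * m : ℕ) : ℤ) - ((y * m : ℕ) : ℤ) := by
      rw [hgdef]; push_cast; ring
    have habs : |g a| * (m : ℤ) = |g a * m| := by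
      rw [abs_mul, abs_of_nonneg (show (0:ℤ) ≤ m by positivity)]
    rw [habs, hgm, e3, abs_le]
    constructor <;> omega
  have hginj : ∀ a ∈ A, ∀ b ∈ A, g a = g b → a = b := by
    intro a _ b _ hab
    have h1 : ((g a : ℤ) : ZMod n) = ((g b : ℤ) : ZMod n) := by rw [hab]
    rw [hgcast, hgcast] at h1
    exact (Units.mul_right_inj u).1 h1
  set B := A.image g with hBdef
  have hBcard : B.card = k := by
    rw [hBdef, Finset.card_image_of_injOn hginj, hAcard]
  have hB0 : (0 : ℤ) ∉ B := by
    intro hb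
    obtain ⟨a, ha, hga⟩ := Finset.mem_image.1 hb
    have h1 : ((g a : ℤ) : ZMod n) = 0 := by rw [hga]; simp
    rw [hgcast] at h1
    have : a = 0 := by
      have := congrArg (fun z => (↑u⁻¹ : ZMod n) * z) h1
      simpa [← mul_assoc] using this
    exact hA0 (this ▸ ha)
  have hBsum : (∑ b ∈ B, b) ≠ 0 := by
    intro hb
    have h1 : ((∑ b ∈ B, b : ℤ) : ZMod n) = 0 := by rw [hb]; simp
    rw [hBdef, Finset.sum_image hginj] at h1
    rw [Int.cast_sum] at h1
    have h2 : ∀ a ∈ A, ((g a : ℤ) : ZMod n) = (u : ZMod n) * a := fun a _ => hgcast a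
    rw [Finset.sum_congr rfl h2, ← Finset.mul_sum] at h1
    have : (∑ z ∈ A, z) = 0 := by
      have := congrArg (fun z => (↑u⁻¹ : ZMod n) * z) h1
      simpa [← mul_assoc] using this
    exact hAsum this
  obtain ⟨lB, hBn, hBm, hBz, hBd⟩ := int_alspach B hB0 hBsum
  have hlBlen : lB.length = k := by
    have h1 : lB.toFinset = B := by ext y; simp [hBm]
    have h2 := List.toFinset_card_of_nodup hBn
    rw [h1, hBcard] at h2
    omega
  have hlBel : ∀ b ∈ lB, |b| * (m : ℤ) ≤ (n : ℤ) - 1 := by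
    intro b hb
    obtain ⟨a, ha, rfl⟩ := Finset.mem_image.1 ((hBm b).1 hb)
    exact hgbound a ha
  -- prefix sums of lB are small
  have hpref : ∀ i : ℕ, |(lB.take i).sum| * (m : ℤ) ≤ (k : ℤ) * ((n : ℤ) - 1) := by
    intro i
    have h1 : ∀ x ∈ lB.take i, |x| * (m : ℤ) ≤ (n : ℤ) - 1 :=
      fun x hx => hlBel x (List.mem_of_mem_take hx)
    have h2 := sum_abs_mul_le (lB.take i) (m : ℤ) ((n : ℤ) - 1) (by positivity) h1
    have h3 : (lB.take i).length ≤ k := by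
      rw [List.length_take]; omega
    have h4 : ((lB.take i).length : ℤ) * ((n : ℤ) - 1) ≤ (k : ℤ) * ((n : ℤ) - 1) := by
      apply mul_le_mul_of_nonneg_right _ (by omega)
      exact_mod_cast h3
    linarith
  -- key: integer prefix sums are distinguished mod n
  have hkey : ∀ S : ℤ, |S| * (m : ℤ) ≤ 2 * (k : ℤ) * ((n : ℤ) - 1) → ((S : ℤ) : ZMod n) = 0 →
      S = 0 := by
    intro S hSb hS0
    by_contra hSne
    have hdvd : (n : ℤ) ∣ S := (ZMod.intCast_zmod_eq_zero_iff_dvd S n).1 hS0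
    have hle : (n : ℤ) ≤ |S| := Int.le_of_dvd (abs_pos.2 hSne) ((dvd_abs _ _).2 hdvd)
    have h1 : (n : ℤ) * (m : ℤ) ≤ |S| * (m : ℤ) :=
      mul_le_mul_of_nonneg_right hle (by positivity)
    have hmz : (m : ℤ) = 2 * (k : ℤ) + 2 := by rw [hmdef]; push_cast; ring
    have hn1' : (1 : ℤ) ≤ (n : ℤ) := by exact_mod_cast hn
    have hk0' : (0 : ℤ) ≤ (k : ℤ) := Int.natCast_nonneg k
    have hexp : (n : ℤ) * (m : ℤ) = 2 * ((k:ℤ) * (n:ℤ)) + 2 * (n:ℤ) := by rw [hmz]; ring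
    have hexp2 : 2 * (k:ℤ) * ((n:ℤ) - 1) = 2 * ((k:ℤ) * (n:ℤ)) - 2 * (k:ℤ) := by ring
    linarith
  set f : ℤ → ZMod n := fun b => (↑u⁻¹ : ZMod n) * ((b : ℤ) : ZMod n) with hfdef
  have hfinj : ∀ b ∈ lB, ∀ c ∈ lB, f b = f c → b = c := by
    intro b hb c hc hbc
    have hbc' : ((b : ℤ) : ZMod n) = ((c : ℤ) : ZMod n) := by
      have h5 := congrArg (fun z => (↑u : ZMod n) * z) hbc
      simp only [hfdef, ← mul_assoc] at h5
      rw [Units.mul_inv] at h5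
      simpa using h5
    have h1 : ((b - c : ℤ) : ZMod n) = 0 := by rw [Int.cast_sub, hbc', sub_self]
    have h2 : |b - c| * (m : ℤ) ≤ 2 * (k : ℤ) * ((n : ℤ) - 1) := by
      have hb' := hlBel b hb
      have hc' := hlBel c hc
      have htri : |b - c| ≤ |b| + |c| := by
        calc |b - c| = |b + (-c)| := by ring_nf
          _ ≤ |b| + |-c| := abs_add_le _ _
          _ = |b| + |c| := by rw [abs_neg]
      have h6 : |b - c| * (m:ℤ) ≤ (|b| + |c|) * (m:ℤ) :=
        mul_le_mul_of_nonneg_right htri (by positivity)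
      have h7 : (|b| + |c|) * (m:ℤ) = |b| * m + |c| * m := by ring
      have hk1' : (1:ℤ) ≤ (k:ℤ) := by exact_mod_cast hk1
      have hn1' : (1:ℤ) ≤ (n:ℤ) := by exact_mod_cast hn
      have h9 : ((n:ℤ) - 1) ≤ (k:ℤ) * ((n:ℤ) - 1) :=
        le_mul_of_one_le_left (by linarith) hk1'
      have h10 : 2 * (k:ℤ) * ((n:ℤ) - 1) = 2 * ((k:ℤ) * ((n:ℤ) - 1)) := by ring
      linarith
    have := hkey _ h2 h1
    omega
  refine ⟨lB.map f, ?_, ?_, ?_, ?_⟩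
  · exact List.Nodup.map_on hfinj hBn
  · intro x
    rw [List.mem_map]
    constructor
    · rintro ⟨b, hb, rfl⟩
      obtain ⟨a, ha, rfl⟩ := Finset.mem_image.1 ((hBm b).1 hb)
      have : f (g a) = a := by
        rw [hfdef]
        simp only
        rw [hgcast, ← mul_assoc, Units.inv_mul, one_mul]
      rw [this]; exact ha
    · intro hx
      refine ⟨g x, (hBm (g x)).2 (Finset.mem_image.2 ⟨x, hx, rfl⟩), ?_⟩
      rw [hfdef]
      simp only
      rw [hgcast, ← mul_assoc, Units.inv_mul, one_mul]
  · intro i h1 h2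
    rw [List.length_map] at h2
    intro hcontra
    rw [← List.map_take] at hcontra
    rw [hfdef, map_mul_cast_sum] at hcontra
    have h3 : (((lB.take i).sum : ℤ) : ZMod n) = 0 := by
      have := congrArg (fun z => (↑u : ZMod n) * z) hcontra
      simp only [← mul_assoc, Units.mul_inv, one_mul, mul_zero] at this
      exact this
    have h4 : (lB.take i).sum = 0 := by
      apply hkey _ _ h3
      have h6 := hpref i
      have hk0 : (0:ℤ) ≤ (k:ℤ) * ((n:ℤ) - 1) := by
        apply mul_nonneg (Int.natCast_nonneg k)
        have hn1' : (1 : ℤ) ≤ (n : ℤ) := by exact_mod_cast hn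
        linarith
      linarith
    exact hBz i h1 (by omega) h4
  · intro i j h1 h2 h3
    rw [List.length_map] at h3
    intro hcontra
    rw [← List.map_take, ← List.map_take] at hcontra
    rw [hfdef, map_mul_cast_sum, map_mul_cast_sum] at hcontra
    have h4' : (((lB.take i).sum : ℤ) : ZMod n) = (((lB.take j).sum : ℤ) : ZMod n) := by
      have h8 := congrArg (fun z => (↑u : ZMod n) * z) hcontra
      simp only [← mul_assoc, Units.mul_inv, one_mul] at h8
      exact h8
    have h4 : (((lB.take i).sum - (lB.take j).sum : ℤ) : ZMod n) = 0 := by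
      rw [Int.cast_sub, h4', sub_self]
    have h5 : (lB.take i).sum - (lB.take j).sum = 0 := by
      apply hkey _ _ h4
      have hi := hpref i
      have hj := hpref j
      set a := (lB.take i).sum
      set b := (lB.take j).sum
      have htri : |a - b| ≤ |a| + |b| := by
        calc |a - b| = |a + (-b)| := by ring_nf
          _ ≤ |a| + |-b| := abs_add_le _ _
          _ = |a| + |b| := by rw [abs_neg]
      have h6 : |a - b| * (m:ℤ) ≤ (|a| + |b|) * (m:ℤ) :=
        mul_le_mul_of_nonneg_right htri (by positivity)
      have h7 : (|a| + |b|) * (m:ℤ) = |a| * m + |b| * m := by ring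
      linarith
    exact hBd i j h1 h2 (by omega) (by omega)
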